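/- Let H be a real m×n matrix with full column rank n, Σ an m×m real symmetric positive definite matrix, W = I − H(Hᵀ Σ⁻¹ H)⁻¹ Hᵀ Σ⁻¹, and let Ω be the diagonal matrix with Ω_{ii} = 1/√((WΣ)_{ii}) if (WΣ)_{ii} ≠ 0 and Ω_{ii} = 0 otherwise. Let e be a random vector in ℝ^m with multivariate Gaussian distribution of mean 0 and covariance Σ, let x ∈ ℝⁿ, a ∈ ℝ^m, and let r̃ = Ω W (Hx + e + a) be the normalized residue of the attacked measurements. Then for any set F ⊆ {1,…,m} of framed meters, E[Σ_{i∈F} r̃_i²] = Σ_{i∈F} (Ω W a)_i² + C, where C is the number of indices i ∈ F with (WΣ)_{ii} ≠ 0. -/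

import Mathlib

open Matrix MeasureTheory ProbabilityTheory Real Filter
open scoped NNReal ENNReal

namespace FramingAux

lemma tendsto_sq_atBot : Tendsto (fun x : ℝ => x ^ 2) atBot atTop := by
  have h : Tendsto (fun x : ℝ => x ^ 2) atTop atTop := tendsto_pow_atTop (by norm_num)
  have := h.comp tendsto_abs_atBot_atTop
  simpa [Function.comp_def, sq_abs] using this

lemma tendsto_neg_mul_sq_atTop {b : ℝ} (hb : 0 < b) :
    Tendsto (fun x : ℝ => -b * x ^ 2) atTop atBot := by
  have h : Tendsto (fun x : ℝ => x ^ 2) atTop atTop := tendsto_pow_atTop (by norm_num)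
  have h1 : Tendsto (fun x : ℝ => b * x ^ 2) atTop atTop := h.const_mul_atTop hb
  have := tendsto_neg_atTop_atBot.comp h1
  simpa [Function.comp_def, neg_mul] using this

lemma tendsto_neg_mul_sq_atBot {b : ℝ} (hb : 0 < b) :
    Tendsto (fun x : ℝ => -b * x ^ 2) atBot atBot := by
  have h1 : Tendsto (fun x : ℝ => b * x ^ 2) atBot atTop :=
    tendsto_sq_atBot.const_mul_atTop hb
  have := tendsto_neg_atTop_atBot.comp h1
  simpa [Function.comp_def, neg_mul] using this

lemma tendsto_exp_neg_mul_sq {b : ℝ} (hb : 0 < b) (l : Filter ℝ)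
    (hl : Tendsto (fun x : ℝ => -b * x ^ 2) l atBot) :
    Tendsto (fun x : ℝ => Real.exp (-b * x ^ 2)) l (nhds 0) :=
  Real.tendsto_exp_atBot.comp hl

lemma tendsto_mul_exp_neg_mul_sq {b : ℝ} (hb : 0 < b) (l : Filter ℝ)
    (hl : l ≤ Filter.cocompact ℝ) :
    Tendsto (fun x : ℝ => x * Real.exp (-b * x ^ 2)) l (nhds 0) := by
  have h0 : Tendsto (fun x : ℝ => |x| ^ (1 : ℝ) * Real.exp (-b * x ^ 2))
      (Filter.cocompact ℝ) (nhds 0) :=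
    tendsto_rpow_abs_mul_exp_neg_mul_sq_cocompact hb 1
  refine squeeze_zero_norm (fun x => ?_) ((h0.mono_left hl))
  rw [Real.norm_eq_abs, abs_mul, abs_of_pos (Real.exp_pos _), Real.rpow_one]

end FramingAux

namespace FramingAux

lemma integrable_exp' {b : ℝ} (hb : 0 < b) :
    Integrable (fun x : ℝ => Real.exp (-b * x ^ 2)) := integrable_exp_neg_mul_sq hb

lemma integrable_mul_exp' {b : ℝ} (hb : 0 < b) :
    Integrable (fun x : ℝ => x * Real.exp (-b * x ^ 2)) := integrable_mul_exp_neg_mul_sq hb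

lemma integrable_sq_mul_exp' {b : ℝ} (hb : 0 < b) :
    Integrable (fun x : ℝ => x ^ 2 * Real.exp (-b * x ^ 2)) := by
  have := integrable_rpow_mul_exp_neg_mul_sq hb (s := 2) (by norm_num)
  refine this.congr (Filter.Eventually.of_forall fun x => ?_)
  norm_num [Real.rpow_natCast]

lemma integral_mul_exp' {b : ℝ} (hb : 0 < b) :
    ∫ x : ℝ, x * Real.exp (-b * x ^ 2) = 0 := by
  have hderiv : ∀ x : ℝ, HasDerivAt (fun y : ℝ => -(1 / (2 * b)) * Real.exp (-b * y ^ 2))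
      (x * Real.exp (-b * x ^ 2)) x := by
    intro x
    have h1 : HasDerivAt (fun y : ℝ => -b * y ^ 2) (-b * (2 * x)) x := by
      simpa [mul_comm] using ((hasDerivAt_pow 2 x).const_mul (-b))
    have h2 := (h1.exp).const_mul (-(1 / (2 * b)))
    refine h2.congr_deriv ?_
    field_simp
  have htop := tendsto_exp_neg_mul_sq hb atTop (tendsto_neg_mul_sq_atTop hb)
  have hbot := tendsto_exp_neg_mul_sq hb atBot (tendsto_neg_mul_sq_atBot hb)
  have h := integral_of_hasDerivAt_of_tendsto hderiv (integrable_mul_exp' hb)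
    (by simpa using hbot.const_mul (-(1 / (2 * b))))
    (by simpa using htop.const_mul (-(1 / (2 * b))))
  simpa using h

lemma integral_sq_mul_exp' {b : ℝ} (hb : 0 < b) :
    ∫ x : ℝ, x ^ 2 * Real.exp (-b * x ^ 2) = (1 / (2 * b)) * Real.sqrt (π / b) := by
  have hderiv : ∀ x : ℝ, HasDerivAt (fun y : ℝ => -(1 / (2 * b)) * (y * Real.exp (-b * y ^ 2)))
      (x ^ 2 * Real.exp (-b * x ^ 2) - (1 / (2 * b)) * Real.exp (-b * x ^ 2)) x := by
    intro x
    have h1 : HasDerivAt (fun y : ℝ => -b * y ^ 2) (-b * (2 * x)) x := by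
      simpa [mul_comm] using ((hasDerivAt_pow 2 x).const_mul (-b))
    have h2 : HasDerivAt (fun y : ℝ => y * Real.exp (-b * y ^ 2))
        (1 * Real.exp (-b * x ^ 2) + x * (Real.exp (-b * x ^ 2) * (-b * (2 * x)))) x :=
      (hasDerivAt_id x).mul h1.exp
    have h3 := h2.const_mul (-(1 / (2 * b)))
    refine h3.congr_deriv ?_
    field_simp
    ring
  have hint : Integrable (fun x : ℝ =>
      x ^ 2 * Real.exp (-b * x ^ 2) - (1 / (2 * b)) * Real.exp (-b * x ^ 2)) :=
    (integrable_sq_mul_exp' hb).sub ((integrable_exp' hb).const_mul _)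
  have htop := (tendsto_mul_exp_neg_mul_sq hb atTop (by rw [cocompact_eq_atBot_atTop]; exact le_sup_right)).const_mul (-(1 / (2 * b)))
  have hbot := (tendsto_mul_exp_neg_mul_sq hb atBot (by rw [cocompact_eq_atBot_atTop]; exact le_sup_left)).const_mul (-(1 / (2 * b)))
  have h := integral_of_hasDerivAt_of_tendsto hderiv hint
    (by simpa using hbot) (by simpa using htop)
  have h2 : (∫ x : ℝ, x ^ 2 * Real.exp (-b * x ^ 2)) -
      ∫ x : ℝ, (1 / (2 * b)) * Real.exp (-b * x ^ 2) = 0 := by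
    rw [← integral_sub (integrable_sq_mul_exp' hb) ((integrable_exp' hb).const_mul _)]
    simpa using h
  have h3 : ∫ x : ℝ, (1 / (2 * b)) * Real.exp (-b * x ^ 2)
      = (1 / (2 * b)) * Real.sqrt (π / b) := by
    rw [integral_const_mul]
    congr 1
    simpa using integral_gaussian b
  linarith [h2, h3]

end FramingAux

namespace FramingAux

lemma gaussianPDF_as_coe (v : ℝ≥0) :
    gaussianPDF 0 v = fun x => ((Real.toNNReal (gaussianPDFReal 0 v x) : ℝ≥0) : ℝ≥0∞) := by
  funext x
  rw [gaussianPDF_def]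
  rfl

lemma pdf_mul_eq (v : ℝ≥0) (hv : v ≠ 0) (c : ℝ) (x : ℝ) :
    gaussianPDFReal 0 v x * (x + c) ^ 2 =
      (Real.sqrt (2 * π * v))⁻¹ * (x ^ 2 * Real.exp (-(2 * (v : ℝ))⁻¹ * x ^ 2))
      + (2 * c * (Real.sqrt (2 * π * v))⁻¹) * (x * Real.exp (-(2 * (v : ℝ))⁻¹ * x ^ 2))
      + (c ^ 2 * (Real.sqrt (2 * π * v))⁻¹) * Real.exp (-(2 * (v : ℝ))⁻¹ * x ^ 2) := by
  have hv' : (0 : ℝ) < v := by positivity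
  rw [gaussianPDFReal]
  have harg : -(x - 0) ^ 2 / (2 * (v : ℝ)) = -(2 * (v : ℝ))⁻¹ * x ^ 2 := by
    field_simp
    ring
  rw [harg]
  ring

lemma integral_sq_add_gaussian (v : ℝ≥0) (c : ℝ) :
    (∫ y, (y + c) ^ 2 ∂(gaussianReal 0 v)) = (v : ℝ) + c ^ 2 ∧
      Integrable (fun y : ℝ => (y + c) ^ 2) (gaussianReal 0 v) := by
  have hg : Measurable fun y : ℝ => (y + c) ^ 2 := (measurable_id.add_const c).pow_const 2
  rcases eq_or_ne v 0 with hv | hv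
  · subst hv
    rw [gaussianReal_zero_var]
    constructor
    · rw [integral_dirac]
      norm_num
    · refine ⟨hg.aestronglyMeasurable, ?_⟩
      have hm : Measurable fun a : ℝ => ‖(a + c) ^ 2‖ₑ := by measurability
      rw [hasFiniteIntegral_def, lintegral_dirac' 0 hm]
      exact ENNReal.coe_lt_top
  · have hv' : (0 : ℝ) < v := by positivity
    set b : ℝ := (2 * (v : ℝ))⁻¹ with hbdef
    have hb : 0 < b := by positivity
    set K : ℝ := (Real.sqrt (2 * π * v))⁻¹ with hKdef
    have hmeas : Measurable fun x => Real.toNNReal (gaussianPDFReal 0 v x) :=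
      (measurable_gaussianPDFReal 0 v).real_toNNReal
    rw [gaussianReal_of_var_ne_zero 0 hv, gaussianPDF_as_coe]
    have hsmul : ∀ x : ℝ, (Real.toNNReal (gaussianPDFReal 0 v x)) • ((x + c) ^ 2)
        = gaussianPDFReal 0 v x * (x + c) ^ 2 := by
      intro x
      simp [NNReal.smul_def, Real.coe_toNNReal _ (gaussianPDFReal_nonneg 0 v x)]
    have hA : Integrable (fun x : ℝ => K * (x ^ 2 * Real.exp (-b * x ^ 2))) :=
      (integrable_sq_mul_exp' hb).const_mul _
    have hB : Integrable (fun x : ℝ => (2 * c * K) * (x * Real.exp (-b * x ^ 2))) :=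
      (integrable_mul_exp' hb).const_mul _
    have hC : Integrable (fun x : ℝ => (c ^ 2 * K) * Real.exp (-b * x ^ 2)) :=
      (integrable_exp' hb).const_mul _
    have hBC : Integrable (fun x : ℝ => (2 * c * K) * (x * Real.exp (-b * x ^ 2))
        + (c ^ 2 * K) * Real.exp (-b * x ^ 2)) := hB.add hC
    have hABC : Integrable (fun x : ℝ => K * (x ^ 2 * Real.exp (-b * x ^ 2))
        + ((2 * c * K) * (x * Real.exp (-b * x ^ 2))
        + (c ^ 2 * K) * Real.exp (-b * x ^ 2))) := hA.add hBC
    have hfun : ∀ x : ℝ, K * (x ^ 2 * Real.exp (-b * x ^ 2))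
        + ((2 * c * K) * (x * Real.exp (-b * x ^ 2))
        + (c ^ 2 * K) * Real.exp (-b * x ^ 2)) = gaussianPDFReal 0 v x * (x + c) ^ 2 := by
      intro x
      rw [pdf_mul_eq v hv c x]
      ring
    have hint2 : Integrable (fun x : ℝ => gaussianPDFReal 0 v x * (x + c) ^ 2) :=
      hABC.congr (Filter.Eventually.of_forall hfun)
    constructor
    · rw [integral_withDensity_eq_integral_smul hmeas]
      simp only [hsmul]
      rw [show (fun x : ℝ => gaussianPDFReal 0 v x * (x + c) ^ 2) = fun x : ℝ =>
          K * (x ^ 2 * Real.exp (-b * x ^ 2))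
          + ((2 * c * K) * (x * Real.exp (-b * x ^ 2))
          + (c ^ 2 * K) * Real.exp (-b * x ^ 2)) from funext fun x => (hfun x).symm]
      rw [integral_add hA hBC, integral_add hB hC,
        integral_const_mul, integral_const_mul, integral_const_mul,
        integral_sq_mul_exp' hb, integral_mul_exp' hb]
      have hpib : π / b = 2 * π * v := by
        rw [hbdef]
        field_simp
      have h2b : 1 / (2 * b) = (v : ℝ) := by
        rw [hbdef]
        field_simp
      have hsqpos : (0 : ℝ) < Real.sqrt (2 * π * v) := Real.sqrt_pos.mpr (by positivity)
      have hE : (∫ x : ℝ, Real.exp (-b * x ^ 2)) = Real.sqrt (2 * π * v) := by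
        rw [← hpib]
        exact integral_gaussian b
      rw [hE, hpib, h2b, hKdef]
      field_simp
      ring
    · rw [integrable_withDensity_iff_integrable_smul hmeas]
      exact hint2.congr (Filter.Eventually.of_forall fun x => (hsmul x).symm)

end FramingAux

namespace FramingAux

lemma key_integral {Ω' : Type*} [MeasurableSpace Ω'] (P : Measure Ω') [IsProbabilityMeasure P]
    {m : ℕ} (e : Ω' → Fin m → ℝ) (he : Measurable e)
    (Sig : Matrix (Fin m) (Fin m) ℝ)
    (hGauss : ∀ l : Fin m → ℝ,
      P.map (fun ω => l ⬝ᵥ e ω) = gaussianReal 0 (l ⬝ᵥ Sig.mulVec l).toNNReal)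
    (l : Fin m → ℝ) (c : ℝ) :
    (∫ ω, (l ⬝ᵥ e ω + c) ^ 2 ∂P)
      = (((l ⬝ᵥ Sig.mulVec l).toNNReal : ℝ≥0) : ℝ) + c ^ 2 ∧
      Integrable (fun ω => (l ⬝ᵥ e ω + c) ^ 2) P := by
  have hφ : Measurable fun ω => l ⬝ᵥ e ω := by
    simp only [dotProduct]
    exact Finset.measurable_sum _ fun j _ =>
      (measurable_const.mul ((measurable_pi_apply j).comp he))
  have hg : Measurable fun y : ℝ => (y + c) ^ 2 := (measurable_id.add_const c).pow_const 2
  have hmap := hGauss l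
  obtain ⟨hval, hint⟩ := integral_sq_add_gaussian ((l ⬝ᵥ Sig.mulVec l).toNNReal) c
  constructor
  · have haem : AEMeasurable (fun ω => l ⬝ᵥ e ω) P := hφ.aemeasurable
    have hsm : AEStronglyMeasurable (fun y : ℝ => (y + c) ^ 2)
        (P.map (fun ω => l ⬝ᵥ e ω)) := hg.aestronglyMeasurable
    have := integral_map haem hsm
    rw [hmap] at this
    rw [← this, hval]
  · have haem : AEMeasurable (fun ω => l ⬝ᵥ e ω) P := hφ.aemeasurable
    have hsm : AEStronglyMeasurable (fun y : ℝ => (y + c) ^ 2)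
        (P.map (fun ω => l ⬝ᵥ e ω)) := hg.aestronglyMeasurable
    exact (integrable_map_measure hsm haem).mp (by rw [hmap]; exact hint)

end FramingAux

namespace FramingAux

lemma mulVec_inj {m n : ℕ} (H : Matrix (Fin m) (Fin n) ℝ) (hH : H.rank = n) :
    Function.Injective H.mulVec := by
  have h1 := LinearMap.finrank_range_add_finrank_ker H.mulVecLin
  have h2 : Module.finrank ℝ (Fin n → ℝ) = n := by simp
  have h3 : H.rank = Module.finrank ℝ (LinearMap.range H.mulVecLin) := rfl
  have hker : Module.finrank ℝ (LinearMap.ker H.mulVecLin) = 0 := by omega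
  have hbot : LinearMap.ker H.mulVecLin = ⊥ := Submodule.finrank_eq_zero.mp hker
  have hinj := LinearMap.ker_eq_bot.mp hbot
  intro u v huv
  exact hinj (by simpa [Matrix.mulVecLin_apply] using huv)

lemma posdef_conj {m n : ℕ} (H : Matrix (Fin m) (Fin n) ℝ)
    (hinj : Function.Injective H.mulVec)
    {A : Matrix (Fin m) (Fin m) ℝ} (hA : A.PosDef) : (Hᵀ * A * H).PosDef := by
  refine Matrix.posDef_iff_dotProduct_mulVec.mpr ⟨?_, ?_⟩
  · have := Matrix.isHermitian_conjTranspose_mul_mul H hA.1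
    simpa [Matrix.conjTranspose_eq_transpose_of_trivial] using this
  · intro x hx
    have hx' : H.mulVec x ≠ 0 := by
      intro h0
      exact hx (hinj (by simpa using h0))
    have := hA.dotProduct_mulVec_pos hx'
    simpa only [star_trivial, ← Matrix.mulVec_mulVec, Matrix.dotProduct_mulVec,
      Matrix.vecMul_transpose] using this

end FramingAux



/-- A random vector `e` on a probability space has the multivariate Gaussian distribution
with mean `0` and covariance `Sig` iff every linear functional `l ⬝ᵥ e` of it is a real
Gaussian with mean `0` and variance `l ⬝ᵥ Sig l`. -/
def IsCenteredGaussianVector {Ω' : Type*} [MeasurableSpace Ω'] (P : Measure Ω')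
    {m : ℕ} (e : Ω' → Fin m → ℝ) (Sig : Matrix (Fin m) (Fin m) ℝ) : Prop :=
  ∀ l : Fin m → ℝ,
    P.map (fun ω => l ⬝ᵥ e ω) = gaussianReal 0 (l ⬝ᵥ Sig.mulVec l).toNNReal

/-- **Expected energy of normalized residues at the framed meters (eq. (17)).**
For Gaussian noise `e ~ N(0, Σ)`, attack vector `a`, and normalized residue
`r̃ = Ω W (Hx + e + a)`, the expected energy of `r̃` on a framed meter set `F` is
`∑_{i∈F} (Ω W a)_i² + C`, where `C` is the number of meters `i ∈ F` with
`(WΣ)_{ii} ≠ 0` (i.e., those not forming a single-element critical set). -/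
theorem expected_framed_residue_energy {m n : ℕ}
    (H : Matrix (Fin m) (Fin n) ℝ) (hH : H.rank = n)
    (Sig : Matrix (Fin m) (Fin m) ℝ) (hSig : Sig.PosDef)
    {Ω' : Type*} [MeasurableSpace Ω'] (P : Measure Ω') [IsProbabilityMeasure P]
    (e : Ω' → Fin m → ℝ) (he : Measurable e)
    (hGauss : IsCenteredGaussianVector P e Sig)
    (x : Fin n → ℝ) (a : Fin m → ℝ) (F : Finset (Fin m)) :
    let W : Matrix (Fin m) (Fin m) ℝ := 1 - H * (Hᵀ * Sig⁻¹ * H)⁻¹ * Hᵀ * Sig⁻¹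
    let Om : Matrix (Fin m) (Fin m) ℝ :=
      Matrix.diagonal fun i =>
        if (W * Sig) i i ≠ 0 then 1 / Real.sqrt ((W * Sig) i i) else 0
    ∫ ω, (∑ i ∈ F, ((Om * W).mulVec (H.mulVec x + e ω + a) i) ^ 2) ∂P =
      ∑ i ∈ F, ((Om * W).mulVec a i) ^ 2 +
        (F.filter fun i => (W * Sig) i i ≠ 0).card := by
  intro W Om
  classical
  set K : Matrix (Fin n) (Fin n) ℝ := Hᵀ * Sig⁻¹ * H with hKdef
  have hSigInv : (Sig⁻¹).PosDef := hSig.inv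
  have hKpd : K.PosDef := FramingAux.posdef_conj H (FramingAux.mulVec_inj H hH) hSigInv
  have hKunit : IsUnit K.det := hKpd.det_pos.ne'.isUnit
  have hSunit : IsUnit Sig.det := hSig.det_pos.ne'.isUnit
  have hWH : W * H = 0 := by
    show (1 - H * K⁻¹ * Hᵀ * Sig⁻¹) * H = 0
    rw [Matrix.sub_mul, Matrix.one_mul]
    have h1 : H * K⁻¹ * Hᵀ * Sig⁻¹ * H = H * (K⁻¹ * K) := by
      rw [hKdef]
      simp only [Matrix.mul_assoc]
    rw [h1, Matrix.nonsing_inv_mul K hKunit, Matrix.mul_one, sub_self]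
  have hWS : W * Sig = Sig - H * K⁻¹ * Hᵀ := by
    show (1 - H * K⁻¹ * Hᵀ * Sig⁻¹) * Sig = _
    rw [Matrix.sub_mul, Matrix.one_mul, Matrix.mul_assoc (H * K⁻¹ * Hᵀ),
      Matrix.nonsing_inv_mul Sig hSunit, Matrix.mul_one]
  have hSigT : Sigᵀ = Sig := by
    have h := hSig.1.eq
    rwa [Matrix.conjTranspose_eq_transpose_of_trivial] at h
  have hKT : Kᵀ = K := by
    have h := hKpd.1.eq
    rwa [Matrix.conjTranspose_eq_transpose_of_trivial] at h
  have hWST : (W * Sig)ᵀ = W * Sig := by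
    rw [hWS, Matrix.transpose_sub, hSigT]
    congr 1
    rw [Matrix.transpose_mul, Matrix.transpose_mul, Matrix.transpose_transpose,
      Matrix.transpose_nonsing_inv, hKT, Matrix.mul_assoc]
  have hWW : W * W = W := by
    have h1 : W * (1 - H * K⁻¹ * Hᵀ * Sig⁻¹) = W - (W * H) * (K⁻¹ * (Hᵀ * Sig⁻¹)) := by
      rw [Matrix.mul_sub, Matrix.mul_one]
      congr 1
      simp only [Matrix.mul_assoc]
    show W * (1 - H * K⁻¹ * Hᵀ * Sig⁻¹) = W
    rw [h1, hWH, Matrix.zero_mul, sub_zero]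
  have hSW : Sig * Wᵀ = W * Sig := by
    have h := hWST
    rwa [Matrix.transpose_mul, hSigT] at h
  have hWSWT : W * Sig * Wᵀ = W * Sig := by
    rw [Matrix.mul_assoc, hSW, ← Matrix.mul_assoc, hWW]
  have hPSD : (W * Sig).PosSemidef := by
    have := hSig.posSemidef.mul_mul_conjTranspose_same W
    rwa [Matrix.conjTranspose_eq_transpose_of_trivial, hWSWT] at this
  have hdiag : ∀ i, 0 ≤ (W * Sig) i i := by
    intro i
    have := hPSD.dotProduct_mulVec_nonneg (Pi.single i 1)
    simpa [Matrix.mulVec_single, single_dotProduct] using this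
  set M : Matrix (Fin m) (Fin m) ℝ := Om * W with hMdef
  have hMH : M * H = 0 := by
    rw [hMdef, Matrix.mul_assoc, hWH, Matrix.mul_zero]
  have hMSM : M * Sig * Mᵀ = Om * (W * Sig) * Omᵀ := by
    rw [hMdef, Matrix.transpose_mul]
    calc Om * W * Sig * (Wᵀ * Omᵀ) = Om * (W * Sig * Wᵀ) * Omᵀ := by
          simp only [Matrix.mul_assoc]
      _ = Om * (W * Sig) * Omᵀ := by rw [hWSWT]
  have hvar : ∀ i : Fin m, (fun j => M i j) ⬝ᵥ Sig.mulVec (fun j => M i j) =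
      (if (W * Sig) i i ≠ 0 then (1 : ℝ) else 0) := by
    intro i
    have h1 : (fun j => M i j) ⬝ᵥ Sig.mulVec (fun j => M i j) = (M * Sig * Mᵀ) i i := by
      simp only [Matrix.mul_apply, Matrix.mulVec, dotProduct, Matrix.transpose_apply,
        Finset.mul_sum, Finset.sum_mul]
      rw [Finset.sum_comm]
      apply Finset.sum_congr rfl
      intro j _
      apply Finset.sum_congr rfl
      intro k _
      ring
    rw [h1, hMSM]
    have h2 : (Om * (W * Sig) * Omᵀ) i i =
        (if (W * Sig) i i ≠ 0 then 1 / Real.sqrt ((W * Sig) i i) else 0) * (W * Sig) i i *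
        (if (W * Sig) i i ≠ 0 then 1 / Real.sqrt ((W * Sig) i i) else 0) := by
      rw [show Omᵀ = Om from Matrix.diagonal_transpose _]
      rw [show Om = Matrix.diagonal (fun i =>
        if (W * Sig) i i ≠ 0 then 1 / Real.sqrt ((W * Sig) i i) else 0) from rfl]
      rw [Matrix.mul_diagonal, Matrix.diagonal_mul]
    rw [h2]
    by_cases hne : (W * Sig) i i ≠ 0
    · have ht : 0 < (W * Sig) i i := lt_of_le_of_ne (hdiag i) (Ne.symm hne)
      have hs0 : Real.sqrt ((W * Sig) i i) ≠ 0 := ne_of_gt (Real.sqrt_pos.mpr ht)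
      simp only [if_pos hne]
      field_simp
      rw [Real.sq_sqrt ht.le]
    · simp [hne]
  have hpoint : ∀ ω : Ω', ∀ i : Fin m, M.mulVec (H.mulVec x + e ω + a) i
      = (fun j => M i j) ⬝ᵥ e ω + M.mulVec a i := by
    intro ω i
    have h0 : M.mulVec (H.mulVec x) = 0 := by
      rw [Matrix.mulVec_mulVec, hMH, Matrix.zero_mulVec]
    rw [Matrix.mulVec_add, Matrix.mulVec_add, h0]
    simp [Matrix.mulVec]
  have hkey := fun i : Fin m => FramingAux.key_integral P e he Sig hGauss
      (fun j => M i j) (M.mulVec a i)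
  have hInt : ∀ i ∈ F, Integrable (fun ω => ((fun j => M i j) ⬝ᵥ e ω + M.mulVec a i) ^ 2) P :=
    fun i _ => (hkey i).2
  calc ∫ ω, (∑ i ∈ F, (M.mulVec (H.mulVec x + e ω + a) i) ^ 2) ∂P
      = ∫ ω, (∑ i ∈ F, ((fun j => M i j) ⬝ᵥ e ω + M.mulVec a i) ^ 2) ∂P := by
        apply integral_congr_ae
        filter_upwards with ω
        exact Finset.sum_congr rfl fun i _ => by rw [hpoint ω i]
    _ = ∑ i ∈ F, ∫ ω, ((fun j => M i j) ⬝ᵥ e ω + M.mulVec a i) ^ 2 ∂P :=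
        integral_finset_sum F hInt
    _ = ∑ i ∈ F, ((((fun j => M i j) ⬝ᵥ Sig.mulVec (fun j => M i j)).toNNReal : ℝ)
          + (M.mulVec a i) ^ 2) := Finset.sum_congr rfl fun i _ => (hkey i).1
    _ = ∑ i ∈ F, ((if (W * Sig) i i ≠ 0 then (1 : ℝ) else 0) + (M.mulVec a i) ^ 2) := by
        refine Finset.sum_congr rfl fun i _ => ?_
        rw [hvar i]
        split <;> simp
    _ = ∑ i ∈ F, (M.mulVec a i) ^ 2 + (F.filter fun i => (W * Sig) i i ≠ 0).card := by
        rw [Finset.sum_add_distrib, Finset.sum_boole]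
        ring
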